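/- Let A be an n×n real matrix with nonnegative entries, let I be the n×n identity matrix, and for i ∈ {1,...,n} let Δᵢ denote the i-th leading principal minor of I − A (the determinant of the upper-left i×i block of I − A). Then A is normal if and only if Δᵢ > 0 for every i ∈ {1,...,n} (i.e., A is admissible in the sense of Perov). -/

import Mathlib

open Matrix

namespace PerovAux
variable {n : ℕ}

/-- Minimum principle: if `x - A x ≥ 0` componentwise, then `x ≥ 0`. -/
lemma sol_nonneg (A : Matrix (Fin n) (Fin n) ℝ) (hA : ∀ i j, 0 ≤ A i j)
    (z : Fin n → ℝ) (hz : ∀ i, 0 < z i) (hAz : ∀ i, A.mulVec z i < z i)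
    (x : Fin n → ℝ) (hx : ∀ i, 0 ≤ x i - A.mulVec x i) : ∀ i, 0 ≤ x i := by
  by_contra h
  push_neg at h
  obtain ⟨i1, hi1⟩ := h
  obtain ⟨i0, -, hi0⟩ := Finset.exists_min_image Finset.univ (fun i => x i / z i)
    ⟨i1, Finset.mem_univ i1⟩
  set m := x i0 / z i0 with hm
  have hmneg : m < 0 := lt_of_le_of_lt (hi0 i1 (Finset.mem_univ i1))
    (div_neg_of_neg_of_pos hi1 (hz i1))
  have hmz : ∀ j, m * z j ≤ x j := by
    intro j
    have := hi0 j (Finset.mem_univ j)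
    calc m * z j ≤ (x j / z j) * z j := by
          exact mul_le_mul_of_nonneg_right this (hz j).le
      _ = x j := div_mul_cancel₀ _ (hz j).ne'
  have h1 : m * A.mulVec z i0 ≤ A.mulVec x i0 := by
    simp only [mulVec, dotProduct, Finset.mul_sum]
    apply Finset.sum_le_sum
    intro j _
    calc m * (A i0 j * z j) = A i0 j * (m * z j) := by ring
      _ ≤ A i0 j * x j := mul_le_mul_of_nonneg_left (hmz j) (hA i0 j)
  have h2 : m * z i0 < m * A.mulVec z i0 := by
    exact mul_lt_mul_of_neg_left (hAz i0) hmneg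
  have h3 : x i0 = m * z i0 := (div_mul_cancel₀ _ (hz i0).ne').symm
  have := hx i0
  nlinarith [h1, h2]

end PerovAux

namespace PerovAux2
open PerovAux
variable {n : ℕ}

lemma ker_triv (A : Matrix (Fin n) (Fin n) ℝ) (hA : ∀ i j, 0 ≤ A i j)
    (z : Fin n → ℝ) (hz : ∀ i, 0 < z i) (hAz : ∀ i, A.mulVec z i < z i)
    (x : Fin n → ℝ) (hx : A.mulVec x = x) : x = 0 := by
  have h1 : ∀ i, 0 ≤ x i := by
    apply sol_nonneg A hA z hz hAz
    intro i; rw [hx]; simp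
  have h2 : ∀ i, 0 ≤ (-x) i := by
    apply sol_nonneg A hA z hz hAz
    intro i; rw [Matrix.mulVec_neg, hx]; simp
  funext i
  have := h2 i
  simp only [Pi.neg_apply, neg_nonneg] at this
  exact le_antisymm this (h1 i)

lemma det_ne (A : Matrix (Fin n) (Fin n) ℝ) (hA : ∀ i j, 0 ≤ A i j)
    (z : Fin n → ℝ) (hz : ∀ i, 0 < z i) (hAz : ∀ i, A.mulVec z i < z i) :
    (1 - A).det ≠ 0 := by
  intro h
  rw [← Matrix.exists_mulVec_eq_zero_iff] at h
  obtain ⟨v, hv, hv0⟩ := h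
  apply hv
  apply ker_triv A hA z hz hAz
  have : (1 - A).mulVec v = Matrix.mulVec 1 v - A.mulVec v := Matrix.sub_mulVec 1 A v
  rw [this, Matrix.one_mulVec] at hv0
  have := sub_eq_zero.mp hv0
  exact this.symm

/-- Solvability of `(1-A) x = v` with nonneg solution when `v ≥ 0`. -/
lemma exists_sol (A : Matrix (Fin n) (Fin n) ℝ) (hA : ∀ i j, 0 ≤ A i j)
    (z : Fin n → ℝ) (hz : ∀ i, 0 < z i) (hAz : ∀ i, A.mulVec z i < z i)
    (v : Fin n → ℝ) (hv : ∀ i, 0 ≤ v i) :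
    ∃ x : Fin n → ℝ, (∀ i, 0 ≤ x i) ∧ (∀ i, x i - A.mulVec x i = v i) := by
  have hdet : IsUnit (1 - A).det := (det_ne A hA z hz hAz).isUnit
  refine ⟨(1 - A)⁻¹.mulVec v, ?_, ?_⟩
  · have heq : (1 - A).mulVec ((1 - A)⁻¹.mulVec v) = v := by
      rw [Matrix.mulVec_mulVec, Matrix.mul_nonsing_inv _ hdet, Matrix.one_mulVec]
    apply sol_nonneg A hA z hz hAz
    intro i
    have : (1 - A).mulVec ((1 - A)⁻¹.mulVec v) i = v i := congrFun heq i
    rw [Matrix.sub_mulVec, Matrix.one_mulVec] at this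
    simp only [Pi.sub_apply] at this
    rw [this]; exact hv i
  · intro i
    have heq : (1 - A).mulVec ((1 - A)⁻¹.mulVec v) = v := by
      rw [Matrix.mulVec_mulVec, Matrix.mul_nonsing_inv _ hdet, Matrix.one_mulVec]
    have : (1 - A).mulVec ((1 - A)⁻¹.mulVec v) i = v i := congrFun heq i
    rw [Matrix.sub_mulVec, Matrix.one_mulVec] at this
    simpa using this

/-- Forward direction core: `det (1 - A) > 0`. -/
lemma det_pos (A : Matrix (Fin n) (Fin n) ℝ) (hA : ∀ i j, 0 ≤ A i j)
    (z : Fin n → ℝ) (hz : ∀ i, 0 < z i) (hAz : ∀ i, A.mulVec z i < z i) :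
    0 < (1 - A).det := by
  set f : ℝ → ℝ := fun t => (1 - t • A).det with hf
  have hcont : Continuous f := by
    apply Continuous.matrix_det
    exact continuous_const.sub (continuous_id.smul continuous_const)
  have hne : ∀ t ∈ Set.Icc (0:ℝ) 1, f t ≠ 0 := by
    intro t ht
    have h1 : ∀ i j, 0 ≤ (t • A) i j := fun i j => mul_nonneg ht.1 (hA i j)
    have h2 : ∀ i, (t • A).mulVec z i < z i := by
      intro i
      have hAzi : 0 ≤ A.mulVec z i := by
        simp only [Matrix.mulVec, dotProduct]
        exact Finset.sum_nonneg fun j _ => mul_nonneg (hA i j) (hz j).le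
      have : (t • A).mulVec z i = t * A.mulVec z i := by
        simp [Matrix.mulVec, dotProduct, Finset.mul_sum, smul_eq_mul, mul_assoc]
      rw [this]
      calc t * A.mulVec z i ≤ 1 * A.mulVec z i :=
            mul_le_mul_of_nonneg_right ht.2 hAzi
        _ = A.mulVec z i := one_mul _
        _ < z i := hAz i
    exact det_ne (t • A) h1 z hz h2
  have hf0 : f 0 = 1 := by simp [hf]
  have hf1 : f 1 = (1 - A).det := by simp [hf]
  by_contra h
  push_neg at h
  have hlt : f 1 < 0 := lt_of_le_of_ne (hf1 ▸ h) (hf1 ▸ hne 1 (by norm_num))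
  have : (0:ℝ) ∈ Set.Icc (f 1) (f 0) := ⟨hlt.le, by rw [hf0]; norm_num⟩
  have := intermediate_value_Icc' (by norm_num : (0:ℝ) ≤ 1) hcont.continuousOn this
  obtain ⟨t, ht, hft⟩ := this
  exact hne t ht hft

lemma forward (A : Matrix (Fin n) (Fin n) ℝ) (hA : ∀ i j, 0 ≤ A i j)
    (z : Fin n → ℝ) (hz : ∀ i, 0 < z i) (hAz : ∀ i, A.mulVec z i < z i)
    (i : Fin n) :
    0 < ((1 - A).submatrix (Fin.castLE i.isLt) (Fin.castLE i.isLt)).det := by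
  set g : Fin (i+1) → Fin n := Fin.castLE i.isLt with hg
  have hginj : Function.Injective g := Fin.castLE_injective _
  have hsub : (1 - A).submatrix g g = 1 - A.submatrix g g := by
    ext a b; simp [Matrix.submatrix_apply, Matrix.one_apply, hginj.eq_iff]
  rw [hsub]
  apply det_pos _ (fun a b => hA _ _) (z ∘ g) (fun a => hz _)
  intro a
  have key : (A.submatrix g g).mulVec (z ∘ g) a ≤ A.mulVec z (g a) := by
    simp only [Matrix.mulVec, dotProduct, Matrix.submatrix_apply, Function.comp_apply]
    have := Finset.sum_map Finset.univ ⟨g, hginj⟩ (fun j => A (g a) j * z j)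
    simp only [Function.Embedding.coeFn_mk] at this
    rw [← this]
    apply Finset.sum_le_sum_of_subset_of_nonneg (Finset.subset_univ _)
    intro j _ _
    exact mul_nonneg (hA _ _) (hz j).le
  exact lt_of_le_of_lt key (hAz (g a))

lemma det_split (A : Matrix (Fin (n+1)) (Fin (n+1)) ℝ) (w : Fin n → ℝ)
    (hw : ∀ i : Fin n, w i - (A.submatrix Fin.castSucc Fin.castSucc).mulVec w i
        = A i.castSucc (Fin.last n)) :
    (1 - A).det = (1 - A.submatrix Fin.castSucc Fin.castSucc).det *
      (1 - A (Fin.last n) (Fin.last n)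
        - ∑ j, A (Fin.last n) j.castSucc * w j) := by
  set A' := A.submatrix Fin.castSucc Fin.castSucc with hA'
  set M := (1 : Matrix (Fin (n+1)) (Fin (n+1)) ℝ) - A with hM
  set s : ℝ := 1 - A (Fin.last n) (Fin.last n) - ∑ j, A (Fin.last n) j.castSucc * w j with hs
  set q : Fin (n+1) → ℝ := Fin.snoc w 1 with hq
  set Q := (1 : Matrix (Fin (n+1)) (Fin (n+1)) ℝ).updateCol (Fin.last n) q with hQ
  set p : Fin (n+1) → ℝ := Fin.snoc 0 s with hp
  set P := M.updateCol (Fin.last n) p with hP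
  have hsub : P.submatrix Fin.castSucc Fin.castSucc = 1 - A' := by
    ext a b
    rw [Matrix.submatrix_apply, hP,
      Matrix.updateCol_ne (Fin.castSucc_lt_last b).ne]
    simp [hM, hA', Matrix.one_apply, Fin.castSucc_inj]
  have hdetQ : Q.det = 1 := by
    rw [hQ, ← Matrix.cramer_apply, Matrix.cramer_one]
    simp [hq]
  have hMQ : M * Q = P := by
    ext i j
    rw [Matrix.mul_apply]
    by_cases hj : j = Fin.last n
    · subst hj
      rw [hP, Matrix.updateCol_self]
      have hQcol : ∀ k, Q k (Fin.last n) = q k := fun k => Matrix.updateCol_self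
      simp_rw [hQcol]
      rw [Fin.sum_univ_castSucc]
      simp only [hq, Fin.snoc_castSucc, Fin.snoc_last, mul_one]
      induction i using Fin.lastCases with
      | last =>
        have h1 : ∀ k : Fin n, M (Fin.last n) (Fin.castSucc k) * w k
            = -(A (Fin.last n) (Fin.castSucc k) * w k) := by
          intro k
          rw [hM]
          simp [Matrix.one_apply, ((Fin.castSucc_lt_last k).ne').symm,
            (Fin.castSucc_lt_last k).ne']
        rw [Finset.sum_congr rfl (fun k _ => h1 k), Finset.sum_neg_distrib]
        simp [hp, Fin.snoc_last, hM, Matrix.one_apply, hs]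
        ring
      | cast i' =>
        have h1 : ∀ k : Fin n, M (Fin.castSucc i') (Fin.castSucc k) * w k
            = (if i' = k then w k else 0) - A' i' k * w k := by
          intro k
          rw [hM]
          simp only [Matrix.sub_apply, Matrix.one_apply, Fin.castSucc_inj, hA',
            Matrix.submatrix_apply]
          split <;> ring
        rw [Finset.sum_congr rfl (fun k _ => h1 k), Finset.sum_sub_distrib,
          Finset.sum_ite_eq Finset.univ i' w]
        have h2 : ∑ k, A' i' k * w k = A'.mulVec w i' := rfl
        have h3 := hw i'
        have h4 : M (Fin.castSucc i') (Fin.last n) = - A (Fin.castSucc i') (Fin.last n) := by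
          rw [hM]
          simp [Matrix.one_apply, (Fin.castSucc_lt_last i').ne]
        simp only [Finset.mem_univ, if_true]
        rw [h2, h4]
        have h5 : p (Fin.castSucc i') = 0 := by
          simp [hp, Fin.snoc_castSucc]
        rw [h5]
        linarith [hw i']
    · rw [hP, Matrix.updateCol_ne hj]
      have hQcol : ∀ k, Q k j = (1 : Matrix (Fin (n+1)) (Fin (n+1)) ℝ) k j :=
        fun k => Matrix.updateCol_ne hj
      simp_rw [hQcol]
      simp [Matrix.one_apply, mul_ite, Finset.sum_ite_eq']
  have hdetP : P.det = (1 - A').det * s := by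
    rw [Matrix.det_succ_column P (Fin.last n)]
    rw [Finset.sum_eq_single (Fin.last n)]
    · rw [hP]
      simp only [Matrix.updateCol_self, hp, Fin.snoc_last, Fin.val_last,
        Fin.succAbove_last]
      rw [← hP, hsub]
      have : ((-1 : ℝ)) ^ (n + n) = 1 := Even.neg_one_pow ⟨n, rfl⟩
      rw [this]
      ring
    · intro i _ hi
      obtain ⟨i', rfl⟩ := Fin.exists_castSucc_eq.mpr hi
      rw [hP]
      simp [Matrix.updateCol_self, hp, Fin.snoc_castSucc]
    · intro h
      exact absurd (Finset.mem_univ _) h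
  have := Matrix.det_mul M Q
  rw [hMQ, hdetQ, mul_one] at this
  rw [← hM] at *
  rw [← this, hdetP]

lemma reverse : ∀ (n : ℕ) (A : Matrix (Fin n) (Fin n) ℝ), (∀ i j, 0 ≤ A i j) →
    (∀ i : Fin n, 0 < ((1 - A).submatrix (Fin.castLE i.isLt) (Fin.castLE i.isLt)).det) →
    ∃ z : Fin n → ℝ, (∀ i, 0 < z i) ∧ ∀ i, A.mulVec z i < z i := by
  intro n
  induction n with
  | zero =>
    intro A _ _
    exact ⟨fun _ => 1, fun i => i.elim0, fun i => i.elim0⟩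
  | succ n ih =>
    intro A hA h
    set A' := A.submatrix Fin.castSucc Fin.castSucc with hA'def
    have hA'nn : ∀ i j, 0 ≤ A' i j := fun i j => hA _ _
    -- leading minors of 1 - A'
    have hmin' : ∀ i : Fin n,
        0 < ((1 - A').submatrix (Fin.castLE i.isLt) (Fin.castLE i.isLt)).det := by
      intro i
      have hcomp : ∀ a : Fin (↑i + 1),
          (Fin.castLE i.isLt a).castSucc = Fin.castLE i.castSucc.isLt a :=
        fun a => Fin.ext rfl
      have heq : (1 - A').submatrix (Fin.castLE i.isLt) (Fin.castLE i.isLt)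
          = (1 - A).submatrix (Fin.castLE i.castSucc.isLt) (Fin.castLE i.castSucc.isLt) := by
        ext a b
        rw [Matrix.submatrix_apply, Matrix.submatrix_apply, Matrix.sub_apply,
          Matrix.sub_apply, ← hcomp a, ← hcomp b]
        simp [hA'def, Matrix.one_apply, Fin.castSucc_inj]
      rw [heq]
      exact h i.castSucc
    obtain ⟨z', hz', hAz'⟩ := ih A' hA'nn hmin'
    have hdetA' : 0 < (1 - A').det := det_pos A' hA'nn z' hz' hAz'
    have hdetM : 0 < (1 - A).det := by
      have := h (Fin.last n)
      have hid : (Fin.castLE (Fin.last n).isLt) = (id : Fin (n+1) → Fin (n+1)) := by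
        funext a; exact Fin.ext rfl
      rwa [hid, Matrix.submatrix_id_id] at this
    obtain ⟨u, hu0, hu⟩ := exists_sol A' hA'nn z' hz' hAz' (fun _ => 1) (fun _ => one_pos.le)
    obtain ⟨w, hw0, hwsol⟩ := exists_sol A' hA'nn z' hz' hAz'
      (fun j => A j.castSucc (Fin.last n)) (fun j => hA _ _)
    set s : ℝ := 1 - A (Fin.last n) (Fin.last n)
      - ∑ j, A (Fin.last n) j.castSucc * w j with hsdef
    have hdetsplit : (1 - A).det = (1 - A').det * s := det_split A w hwsol
    have hspos : 0 < s := by nlinarith [hdetM, hdetA', hdetsplit]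
    have hcu : 0 ≤ ∑ j, A (Fin.last n) j.castSucc * u j :=
      Finset.sum_nonneg fun j _ => mul_nonneg (hA _ _) (hu0 j)
    set t : ℝ := (1 + ∑ j, A (Fin.last n) j.castSucc * u j) / s with htdef
    have ht : 0 < t := div_pos (by linarith) hspos
    have hts : t * s = 1 + ∑ j, A (Fin.last n) j.castSucc * u j :=
      div_mul_cancel₀ _ hspos.ne'
    set z : Fin (n+1) → ℝ := Fin.snoc (fun i => u i + t * w i) t with hzdef
    have hzc : ∀ i' : Fin n, z i'.castSucc = u i' + t * w i' := by
      intro i'; simp [hzdef, Fin.snoc_castSucc]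
    have hzl : z (Fin.last n) = t := by simp [hzdef, Fin.snoc_last]
    have humv : ∀ i', 0 ≤ A'.mulVec u i' := by
      intro i'
      simp only [Matrix.mulVec, dotProduct]
      exact Finset.sum_nonneg fun j _ => mul_nonneg (hA'nn _ _) (hu0 j)
    have hu1 : ∀ i', 1 ≤ u i' := by
      intro i'
      have := hu i'
      have := humv i'
      linarith
    have hsumz : ∀ i : Fin (n+1), A.mulVec z i
        = (∑ j : Fin n, A i j.castSucc * u j)
          + t * (∑ j : Fin n, A i j.castSucc * w j) + A i (Fin.last n) * t := by
      intro i
      simp only [Matrix.mulVec, dotProduct]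
      rw [Fin.sum_univ_castSucc]
      have : ∀ j : Fin n, A i j.castSucc * z j.castSucc
          = A i j.castSucc * u j + t * (A i j.castSucc * w j) := by
        intro j; rw [hzc j]; ring
      rw [Finset.sum_congr rfl fun j _ => this j, Finset.sum_add_distrib,
        ← Finset.mul_sum, hzl]
    refine ⟨z, ?_, ?_⟩
    · intro i
      induction i using Fin.lastCases with
      | last => rw [hzl]; exact ht
      | cast i' =>
        rw [hzc i']
        have := hu1 i'
        have := hw0 i'
        nlinarith
    · intro i
      induction i using Fin.lastCases with
      | last =>
        rw [hsumz, hzl]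
        have hcw : ∑ j : Fin n, A (Fin.last n) j.castSucc * w j
            = 1 - A (Fin.last n) (Fin.last n) - s := by rw [hsdef]; ring
        rw [hcw]
        nlinarith [hts, ht]
      | cast i' =>
        rw [hsumz, hzc i']
        have h1 : ∑ j : Fin n, A i'.castSucc j.castSucc * u j = A'.mulVec u i' := rfl
        have h2 : ∑ j : Fin n, A i'.castSucc j.castSucc * w j = A'.mulVec w i' := rfl
        rw [h1, h2]
        have e1 := hu i'
        have e2 := hwsol i'
        nlinarith [ht]

end PerovAux2

/-- A nonnegative matrix `A` is normal iff all leading principal minors of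
`I - A` are strictly positive (i.e. `A` is admissible in the sense of Perov). -/
theorem stmt3 {n : ℕ} (A : Matrix (Fin n) (Fin n) ℝ)
    (hA : ∀ i j, 0 ≤ A i j) :
    (∃ z : Fin n → ℝ, (∀ i, 0 < z i) ∧ ∀ i, A.mulVec z i < z i) ↔
      ∀ i : Fin n,
        0 < ((1 - A).submatrix (Fin.castLE i.isLt) (Fin.castLE i.isLt)).det := by
  constructor
  · rintro ⟨z, hz, hAz⟩ i
    exact PerovAux2.forward A hA z hz hAz i
  · intro h
    exact PerovAux2.reverse n A hA h
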